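/- arXiv:2302.12520 — 3 statements merged into one kernel-verified Lean document; each statement's English description precedes it below -/
import Mathlib

section
/- Let n agents have reduction rates λ_1,…,λ_n ≥ 0 and budget b ∈ ℕ. Any allocation c : Fin n → ℕ with Σ c_i ≤ b that maximizes Σ_i (1 - e^{-λ_i c_i}) achieves objective value equal to the sum of the b largest elements of the multiset {Δ_i^j : i ∈ [n], 1 ≤ j ≤ b}, where Δ_i^j = e^{-λ_i(j-1)} - e^{-λ_i j} (assuming all λ_i > 0 so all jumps are positive). -/
/-- Sum of take b is monotone when prepending a dominating nonneg element. -/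
private lemma take_sum_mono (a : ℝ) (L : List ℝ) (ha : ∀ x ∈ L, x ≤ a) (ha0 : 0 ≤ a) (b : ℕ) :
    (L.take b).sum ≤ ((a :: L).take b).sum := by
  cases b with
  | zero => simp
  | succ b' =>
    simp only [List.take_succ_cons, List.sum_cons]
    by_cases h : b' < L.length
    · rw [List.sum_take_succ L b' h]
      have : L[b'] ≤ a := ha _ (List.getElem_mem h)
      linarith
    · rw [List.take_of_length_le (by omega), List.take_of_length_le (by omega)]
      linarith

/-- Sum of any submultiset of size ≤ b is at most the sum of the first b entries of a
sorted (descending) nonnegative list. -/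
private lemma sum_le_take_of_le (L : List ℝ) (hs : L.Pairwise (· ≥ ·)) (h0 : ∀ x ∈ L, 0 ≤ x) :
    ∀ (b : ℕ) (N : Multiset ℝ), N ≤ (L : Multiset ℝ) → Multiset.card N ≤ b →
      N.sum ≤ (L.take b).sum := by
  induction L with
  | nil =>
    intro b N hN _
    have : N = 0 := le_antisymm (by simpa using hN) (Multiset.zero_le N)
    simp [this]
  | cons a L ih =>
    intro b N hN hcard
    have hs' : L.Pairwise (· ≥ ·) := hs.tail
    have h0' : ∀ x ∈ L, 0 ≤ x := fun x hx => h0 x (List.mem_cons_of_mem a hx)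
    have ha : ∀ x ∈ L, x ≤ a := fun x hx => List.rel_of_pairwise_cons hs hx
    have ha0 : 0 ≤ a := h0 a (List.mem_cons_self)
    by_cases haN : a ∈ N
    · have hb1 : 1 ≤ b := le_trans (Multiset.card_pos.mpr (fun h => by simp [h] at haN)) hcard
      obtain ⟨b', rfl⟩ : ∃ b', b = b' + 1 := ⟨b - 1, by omega⟩
      have hN' : N.erase a ≤ (L : Multiset ℝ) := by
        have := Multiset.erase_le_erase a hN
        simpa [Multiset.cons_coe] using this
      have hcard' : Multiset.card (N.erase a) ≤ b' := by
        rw [Multiset.card_erase_of_mem haN]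
        exact Nat.pred_le_pred hcard
      have hsum : N.sum = a + (N.erase a).sum := by
        conv_lhs => rw [← Multiset.cons_erase haN]
        simp
      rw [hsum]
      have := ih hs' h0' b' (N.erase a) hN' hcard'
      simpa using add_le_add_left this a
    · have hN' : N ≤ (L : Multiset ℝ) := by
        rw [Multiset.le_iff_count] at hN ⊢
        intro x
        rcases eq_or_ne x a with rfl | hx
        · simp [Multiset.count_eq_zero_of_notMem haN]
        · have := hN x
          rwa [show ((a :: L : List ℝ) : Multiset ℝ) = a ::ₘ (L : Multiset ℝ) from rfl,
            Multiset.count_cons_of_ne hx] at this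
      exact (ih hs' h0' b N hN' hcard).trans (take_sum_mono a L ha ha0 b)

/-- Decompose a submultiset of a mapped multiset. -/
private lemma exists_of_le_map {α β : Type*} [DecidableEq β] (f : α → β) :
    ∀ (s : Multiset α) (N : Multiset β), N ≤ s.map f → ∃ t, t ≤ s ∧ t.map f = N := by
  intro s
  induction s using Multiset.induction_on with
  | empty =>
    intro N hN
    exact ⟨0, le_refl _, by simpa using (le_antisymm (by simpa using hN) (Multiset.zero_le N)).symm⟩
  | cons a s ih =>
    intro N hN
    rw [Multiset.map_cons] at hN
    by_cases hfa : f a ∈ N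
    · have h1 : N.erase (f a) ≤ s.map f := by
        have := Multiset.erase_le_erase (f a) hN
        simpa using this
      obtain ⟨t', ht', hmap⟩ := ih _ h1
      refine ⟨a ::ₘ t', Multiset.cons_le_cons a ht', ?_⟩
      rw [Multiset.map_cons, hmap, Multiset.cons_erase hfa]
    · have h1 : N ≤ s.map f := by
        rw [Multiset.le_iff_count] at hN ⊢
        intro x
        rcases eq_or_ne x (f a) with rfl | hx
        · simp [Multiset.count_eq_zero_of_notMem hfa]
        · have := hN x
          rwa [Multiset.count_cons_of_ne hx] at this
      obtain ⟨t', ht', hmap⟩ := ih _ h1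
      exact ⟨t', le_trans ht' (Multiset.le_cons_self s a), hmap⟩


private noncomputable def jmp (l : ℝ) (j : ℕ) : ℝ := Real.exp (-l * ((j : ℝ) - 1)) - Real.exp (-l * j)

private lemma jmp_factor (l : ℝ) (j : ℕ) :
    jmp l j = Real.exp (-l * ((j : ℝ) - 1)) * (1 - Real.exp (-l)) := by
  unfold jmp
  have : -l * (j : ℝ) = -l * ((j : ℝ) - 1) + -l := by ring
  rw [this, Real.exp_add]
  ring

private lemma jmp_nonneg {l : ℝ} (hl : 0 < l) (j : ℕ) : 0 ≤ jmp l j := by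
  rw [jmp_factor]
  have h1 : Real.exp (-l) < 1 := by
    rw [Real.exp_lt_one_iff]; linarith
  have h2 : (0:ℝ) < Real.exp (-l * ((j : ℝ) - 1)) := Real.exp_pos _
  nlinarith

private lemma jmp_anti {l : ℝ} (hl : 0 < l) {j j' : ℕ} (h : j ≤ j') : jmp l j' ≤ jmp l j := by
  rw [jmp_factor, jmp_factor]
  have h1 : Real.exp (-l) < 1 := by
    rw [Real.exp_lt_one_iff]; linarith
  have h2 : Real.exp (-l * ((j' : ℝ) - 1)) ≤ Real.exp (-l * ((j : ℝ) - 1)) := by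
    apply Real.exp_le_exp.mpr
    have : (j : ℝ) ≤ (j' : ℝ) := Nat.cast_le.mpr h
    nlinarith
  nlinarith

private lemma jmp_telescope (l : ℝ) (k : ℕ) :
    ∑ j ∈ Finset.Icc 1 k, jmp l j = 1 - Real.exp (-l * k) := by
  induction k with
  | zero => simp
  | succ k ih =>
    rw [Finset.sum_Icc_succ_top (Nat.succ_le_succ (Nat.zero_le k)), ih]
    unfold jmp
    have h1 : ((k + 1 : ℕ) : ℝ) - 1 = (k : ℝ) := by push_cast; ring
    rw [h1]
    ring

/-- Sum of jumps over any subset of positive integers with card k is at most the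
sum of the first k jumps. -/
private lemma jmp_subset_sum {l : ℝ} (hl : 0 < l) (J : Finset ℕ) (hJ : ∀ j ∈ J, 1 ≤ j) :
    ∑ j ∈ J, jmp l j ≤ ∑ j ∈ Finset.Icc 1 J.card, jmp l j := by
  set k := J.card with hk
  let e := J.orderIsoOfFin hk.symm
  have key : ∀ v : ℕ, ∀ hv : v < k, v + 1 ≤ (e ⟨v, hv⟩ : ℕ) := by
    intro v
    induction v with
    | zero => intro hv; exact hJ _ (e ⟨0, hv⟩).2
    | succ v ihv =>
      intro hv
      have hv' : v < k := by omega
      have hlt : (e ⟨v, hv'⟩ : ℕ) < (e ⟨v + 1, hv⟩ : ℕ) := by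
        have : (⟨v, hv'⟩ : Fin k) < ⟨v + 1, hv⟩ := by simp [Fin.lt_def]
        exact e.strictMono this
      have := ihv hv'
      omega
  have h1 : ∑ j ∈ J, jmp l j = ∑ m : Fin k, jmp l (e m : ℕ) := by
    rw [← Finset.sum_attach J (fun j => jmp l j)]
    exact (Fintype.sum_equiv e.toEquiv _ _ (fun m => rfl)).symm
  have h2 : ∑ j ∈ Finset.Icc 1 k, jmp l j = ∑ m : Fin k, jmp l (m + 1) := by
    rw [Fin.sum_univ_eq_sum_range (fun m => jmp l (m + 1)) k]
    rw [show Finset.Icc 1 k = Finset.Ico 1 (k + 1) by rw [Finset.Ico_add_one_right_eq_Icc],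
      Finset.sum_Ico_eq_sum_range]
    simp [add_comm]
  rw [h1, h2]
  apply Finset.sum_le_sum
  intro m _
  exact jmp_anti hl (key m.1 m.2)


private lemma sum_over_sub {n b : ℕ} {M : Type*} [AddCommMonoid M]
    (Q : Finset (Fin n × ℕ)) (hQ : Q ⊆ Finset.univ ×ˢ Finset.Icc 1 b) (F : Fin n × ℕ → M) :
    ∑ p ∈ Q, F p = ∑ i, ∑ j ∈ (Finset.Icc 1 b).filter (fun j => (i, j) ∈ Q), F (i, j) := by
  classical
  rw [← Finset.sum_fiberwise_of_maps_to (t := (Finset.univ : Finset (Fin n)))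
    (g := Prod.fst) (fun p _ => Finset.mem_univ p.1) F]
  refine Finset.sum_congr rfl fun i _ => ?_
  refine Finset.sum_nbij' (fun p => p.2) (fun j => (i, j)) ?_ ?_ ?_ ?_ ?_
  · rintro ⟨p1, p2⟩ hp
    simp only [Finset.mem_filter] at hp ⊢
    obtain ⟨hpQ, hpi⟩ := hp
    have hmem := hQ hpQ
    simp only [Finset.mem_product] at hmem
    subst hpi
    exact ⟨hmem.2, hpQ⟩
  · intro j hj
    simp only [Finset.mem_filter] at hj ⊢
    exact ⟨hj.2, trivial⟩
  · rintro ⟨p1, p2⟩ hp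
    simp only [Finset.mem_filter] at hp
    rw [← hp.2]
  · intro j hj; rfl
  · rintro ⟨p1, p2⟩ hp
    simp only [Finset.mem_filter] at hp
    rw [← hp.2]

theorem optimal_value_eq_sum_of_b_largest_jumps (n b : ℕ) (lam : Fin n → ℝ)
    (hlam : ∀ i, 0 < lam i) (c : Fin n → ℕ) (hc : ∑ i, c i ≤ b)
    (hopt : ∀ c' : Fin n → ℕ, (∑ i, c' i ≤ b) →
      ∑ i, (1 - Real.exp (-lam i * c' i)) ≤ ∑ i, (1 - Real.exp (-lam i * c i))) :
    ∑ i, (1 - Real.exp (-lam i * c i)) =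
      (((((Finset.univ : Finset (Fin n)) ×ˢ Finset.Icc 1 b).val.map
          (fun p : Fin n × ℕ =>
            Real.exp (-lam p.1 * ((p.2 : ℝ) - 1)) - Real.exp (-lam p.1 * p.2))).sort
        (· ≥ ·)).take b).sum := by
  classical
  set f : Fin n × ℕ → ℝ := fun p : Fin n × ℕ =>
      Real.exp (-lam p.1 * ((p.2 : ℝ) - 1)) - Real.exp (-lam p.1 * p.2) with hf
  set pairs : Finset (Fin n × ℕ) := (Finset.univ : Finset (Fin n)) ×ˢ Finset.Icc 1 b with hpairs
  set L : List ℝ := ((pairs.val.map f).sort (· ≥ ·)) with hLdef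
  have hfj : ∀ p : Fin n × ℕ, f p = jmp (lam p.1) p.2 := fun _ => rfl
  have hcoe : (L : Multiset ℝ) = pairs.val.map f := Multiset.sort_eq _ _
  have hsorted : L.Pairwise (· ≥ ·) := Multiset.pairwise_sort _ _
  have hmem0 : ∀ x ∈ L, 0 ≤ x := by
    intro x hx
    rw [hLdef, Multiset.mem_sort] at hx
    obtain ⟨p, _, rfl⟩ := Multiset.mem_map.mp hx
    rw [hfj]
    exact jmp_nonneg (hlam p.1) p.2
  have hval : ∀ c' : Fin n → ℕ,
      ∑ i, (1 - Real.exp (-lam i * c' i)) = ∑ i, ∑ j ∈ Finset.Icc 1 (c' i), jmp (lam i) j := by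
    intro c'
    exact Finset.sum_congr rfl fun i _ => (jmp_telescope (lam i) (c' i)).symm
  -- the per-agent budgets are at most b
  have hcib : ∀ i, c i ≤ b := fun i =>
    le_trans (Finset.single_le_sum (f := fun i => c i) (fun _ _ => Nat.zero_le _)
      (Finset.mem_univ i)) hc
  -- Upper bound
  set Pc : Finset (Fin n × ℕ) := pairs.filter (fun p => p.2 ≤ c p.1) with hPcdef
  have hPcsub : Pc ⊆ pairs := Finset.filter_subset _ _
  have hJc : ∀ i : Fin n, (Finset.Icc 1 b).filter (fun j => (i, j) ∈ Pc) =
      Finset.Icc 1 (c i) := by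
    intro i
    have hci := hcib i
    ext j
    simp only [hPcdef, hpairs, Finset.mem_filter, Finset.mem_Icc, Finset.mem_product,
      Finset.mem_univ, true_and]
    omega
  have hsumPc : ∑ p ∈ Pc, f p = ∑ i, ∑ j ∈ Finset.Icc 1 (c i), jmp (lam i) j := by
    rw [sum_over_sub Pc hPcsub f]
    refine Finset.sum_congr rfl fun i _ => ?_
    rw [hJc i]
    exact Finset.sum_congr rfl fun j _ => hfj _
  have hcardPc : Pc.card = ∑ i, c i := by
    rw [Finset.card_eq_sum_ones Pc, sum_over_sub Pc hPcsub (fun _ => 1)]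
    refine Finset.sum_congr rfl fun i _ => ?_
    rw [hJc i]
    simp [Nat.card_Icc]
  have hub : ∑ i, (1 - Real.exp (-lam i * c i)) ≤ (L.take b).sum := by
    rw [hval c, ← hsumPc]
    have h1 : (Pc.val.map f) ≤ (L : Multiset ℝ) := by
      rw [hcoe]
      exact Multiset.map_le_map (Finset.val_le_iff.mpr hPcsub)
    have h2 : Multiset.card (Pc.val.map f) ≤ b := by
      rw [Multiset.card_map]
      exact le_trans (le_of_eq hcardPc) hc
    exact sum_le_take_of_le L hsorted hmem0 b _ h1 h2
  -- Lower bound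
  have htake_le : ((L.take b : List ℝ) : Multiset ℝ) ≤ pairs.val.map f := by
    rw [← hcoe]
    exact Multiset.coe_le.mpr (List.take_sublist b L).subperm
  obtain ⟨t, ht, hmap⟩ := exists_of_le_map f pairs.val _ htake_le
  have htnd : t.Nodup := Multiset.nodup_of_le ht pairs.nodup
  set Q : Finset (Fin n × ℕ) := ⟨t, htnd⟩ with hQdef
  have hQsub : Q ⊆ pairs := Finset.val_le_iff.mp ht
  set c' : Fin n → ℕ := fun i => ((Finset.Icc 1 b).filter (fun j => (i, j) ∈ Q)).card with hc'def
  have hsumc' : ∑ i, c' i = Q.card := by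
    rw [Finset.card_eq_sum_ones Q, sum_over_sub Q hQsub (fun _ => 1)]
    exact Finset.sum_congr rfl fun i _ => Finset.card_eq_sum_ones _
  have hQcard : Q.card ≤ b := by
    have h1 : Q.card = (L.take b).length := by
      have := congrArg Multiset.card hmap
      simp at this
      rw [List.length_take]
      exact this
    rw [h1, List.length_take]
    exact min_le_left _ _
  have hfeas : ∑ i, c' i ≤ b := by rw [hsumc']; exact hQcard
  have hlow : (L.take b).sum ≤ ∑ i, (1 - Real.exp (-lam i * c' i)) := by
    have h1 : (L.take b).sum = ∑ p ∈ Q, f p := by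
      have h3 : ((L.take b : List ℝ) : Multiset ℝ).sum = (L.take b).sum := by simp
      rw [← h3, ← hmap]
      rfl
    rw [h1, hval c', sum_over_sub Q hQsub f]
    apply Finset.sum_le_sum
    intro i _
    have hJQ : ∀ j ∈ (Finset.Icc 1 b).filter (fun j => (i, j) ∈ Q), 1 ≤ j :=
      fun j hj => (Finset.mem_Icc.mp (Finset.mem_filter.mp hj).1).1
    have := jmp_subset_sum (hlam i) ((Finset.Icc 1 b).filter (fun j => (i, j) ∈ Q)) hJQ
    simpa [hc'def, hfj] using this
  have hopt' := hopt c' hfeas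
  linarith
end

section
/- Greedy optimality: with n agents having reduction rates λ_i ≥ 0 and integer budget b, the allocation produced by repeatedly assigning one unit of budget to the agent with the maximal current marginal jump Δ_i^{c_i+1} = e^{-λ_i c_i} - e^{-λ_i (c_i+1)} yields an allocation maximizing Σ_i (1 - e^{-λ_i c_i}) subject to Σ_i c_i ≤ b. -/
noncomputable def jump (l : ℝ) (c : ℕ) : ℝ :=
  Real.exp (-l * c) - Real.exp (-l * (c + 1))

noncomputable def greedyMJS {n : ℕ} (lam : Fin n → ℝ) : ℕ → (Fin n → ℕ)
  | 0 => fun _ => 0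
  | b + 1 =>
    let c := greedyMJS lam b
    if h : ∃ l : Fin n, ∀ i : Fin n, jump (lam i) (c i) ≤ jump (lam l) (c l) then
      Function.update c h.choose (c h.choose + 1)
    else c

lemma jump_eq (l : ℝ) (c : ℕ) : jump l c = Real.exp (-l * c) * (1 - Real.exp (-l)) := by
  unfold jump
  rw [mul_sub, mul_one, ← Real.exp_add]
  ring_nf

lemma exp_neg_le_one {l : ℝ} (hl : 0 ≤ l) : Real.exp (-l) ≤ 1 :=
  Real.exp_le_one_iff.2 (by linarith)

lemma jump_nonneg {l : ℝ} (hl : 0 ≤ l) (c : ℕ) : 0 ≤ jump l c := by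
  rw [jump_eq]
  have := exp_neg_le_one hl
  apply mul_nonneg (Real.exp_nonneg _)
  linarith

lemma jump_anti {l : ℝ} (hl : 0 ≤ l) {c d : ℕ} (h : c ≤ d) : jump l d ≤ jump l c := by
  rw [jump_eq, jump_eq]
  have h1 := exp_neg_le_one hl
  apply mul_le_mul_of_nonneg_right _ (by linarith)
  apply Real.exp_le_exp.2
  have : (c : ℝ) ≤ d := Nat.cast_le.2 h
  nlinarith

lemma sum_jump (l : ℝ) (c : ℕ) :
    1 - Real.exp (-l * c) = ∑ k ∈ Finset.range c, jump l k := by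
  induction c with
  | zero => simp
  | succ m ih =>
    rw [Finset.sum_range_succ, ← ih]
    unfold jump
    push_cast
    ring

lemma greedy_succ {n : ℕ} (lam : Fin n → ℝ) (b : ℕ) [Nonempty (Fin n)] :
    ∃ l : Fin n,
      greedyMJS lam (b + 1) =
        Function.update (greedyMJS lam b) l (greedyMJS lam b l + 1) ∧
      ∀ i, jump (lam i) (greedyMJS lam b i) ≤ jump (lam l) (greedyMJS lam b l) := by
  have h : ∃ l : Fin n, ∀ i : Fin n,
      jump (lam i) (greedyMJS lam b i) ≤ jump (lam l) (greedyMJS lam b l) :=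
    Finite.exists_max _
  refine ⟨h.choose, ?_, h.choose_spec⟩
  rw [greedyMJS]
  simp only [dif_pos h]

section Aux

variable {n : ℕ} (lam : Fin n → ℝ)

/-- The objective written as a sum of jumps. -/
noncomputable def FF (c : Fin n → ℕ) : ℝ :=
  ∑ i, ∑ k ∈ Finset.range (c i), jump (lam i) k

lemma FF_mono (hlam : ∀ i, 0 ≤ lam i) {c d : Fin n → ℕ} (h : ∀ i, c i ≤ d i) :
    FF lam c ≤ FF lam d := by
  apply Finset.sum_le_sum
  intro i _
  apply Finset.sum_le_sum_of_subset_of_nonneg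
  · exact Finset.range_subset_range.2 (h i)
  · intro k _ _
    exact jump_nonneg (hlam i) k

lemma FF_update (c : Fin n → ℕ) (l : Fin n) :
    FF lam (Function.update c l (c l + 1)) = FF lam c + jump (lam l) (c l) := by
  unfold FF
  rw [← Finset.add_sum_erase _ _ (Finset.mem_univ l),
      ← Finset.add_sum_erase Finset.univ (fun i => ∑ k ∈ Finset.range (c i), jump (lam i) k)
        (Finset.mem_univ l)]
  have h1 : ∑ i ∈ Finset.univ.erase l,
      ∑ k ∈ Finset.range (Function.update c l (c l + 1) i), jump (lam i) k =
      ∑ i ∈ Finset.univ.erase l, ∑ k ∈ Finset.range (c i), jump (lam i) k := by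
    apply Finset.sum_congr rfl
    intro i hi
    rw [Function.update_of_ne (Finset.ne_of_mem_erase hi)]
  rw [h1, Function.update_self, Finset.sum_range_succ]
  ring

lemma sum_update_nat (c : Fin n → ℕ) (l : Fin n) (v : ℕ) :
    ∑ i, Function.update c l v i = v + ∑ i ∈ Finset.univ.erase l, c i := by
  rw [← Finset.add_sum_erase _ _ (Finset.mem_univ l), Function.update_self]
  congr 1
  apply Finset.sum_congr rfl
  intro i hi
  rw [Function.update_of_ne (Finset.ne_of_mem_erase hi)]

lemma greedy_aux (hlam : ∀ i, 0 ≤ lam i) (b : ℕ) :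
    (∑ i, greedyMJS lam b i ≤ b) ∧
    ∀ c : Fin n → ℕ, (∑ i, c i ≤ b) → FF lam c ≤ FF lam (greedyMJS lam b) := by
  induction b with
  | zero =>
    constructor
    · simp [greedyMJS]
    · intro c hc
      have hc0 : ∀ i, c i = 0 := by
        intro i
        have := Finset.single_le_sum (f := c) (fun j _ => Nat.zero_le _) (Finset.mem_univ i)
        omega
      have : c = greedyMJS lam 0 := by
        funext i; simp [greedyMJS, hc0 i]
      rw [this]
  | succ b ih =>
    rcases Nat.eq_zero_or_pos n with hn | hn
    · subst hn
      constructor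
      · simp
      · intro c hc
        unfold FF
        simp
    · have : Nonempty (Fin n) := ⟨⟨0, hn⟩⟩
      obtain ⟨l, hg, hmax⟩ := greedy_succ lam b
      set g := greedyMJS lam b with hgdef
      have hsum' : ∑ i, greedyMJS lam (b + 1) i = (∑ i, g i) + 1 := by
        rw [hg, sum_update_nat, ← Finset.add_sum_erase _ _ (Finset.mem_univ l)]
        omega
      have hFg' : FF lam (greedyMJS lam (b + 1)) = FF lam g + jump (lam l) (g l) := by
        rw [hg, FF_update]
      constructor
      · omega
      · intro c hc
        by_cases hle : ∀ i, c i ≤ g i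
        · calc FF lam c ≤ FF lam g := FF_mono lam hlam hle
            _ ≤ FF lam (greedyMJS lam (b + 1)) := by
              rw [hFg']
              have := jump_nonneg (hlam l) (g l)
              linarith
        · push_neg at hle
          obtain ⟨i, hi⟩ := hle
          set c' := Function.update c i (c i - 1) with hc'def
          have hci : 1 ≤ c i := by omega
          have hcc' : c = Function.update c' i (c' i + 1) := by
            funext j
            rcases eq_or_ne j i with rfl | hj
            · simp [hc'def]; omega
            · simp [hc'def, Function.update_of_ne hj]
          have hsumc' : ∑ j, c' j ≤ b := by
            have h1 : ∑ j, c' j = (c i - 1) + ∑ j ∈ Finset.univ.erase i, c j :=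
              sum_update_nat c i (c i - 1)
            have h2 : ∑ j, c j = c i + ∑ j ∈ Finset.univ.erase i, c j :=
              (Finset.add_sum_erase _ _ (Finset.mem_univ i)).symm
            omega
          have hFc : FF lam c = FF lam c' + jump (lam i) (c' i) := by
            conv_lhs => rw [hcc']
            exact FF_update lam c' i
          have hjle : jump (lam i) (c' i) ≤ jump (lam l) (g l) := by
            calc jump (lam i) (c' i) ≤ jump (lam i) (g i) := by
                  apply jump_anti (hlam i)
                  simp [hc'def]; omega
              _ ≤ jump (lam l) (g l) := hmax i
          have := ih.2 c' hsumc'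
          rw [hFc, hFg']
          linarith

end Aux

theorem greedy_optimal {n : ℕ} (lam : Fin n → ℝ) (hlam : ∀ i, 0 ≤ lam i) (b : ℕ) :
    (∑ i, greedyMJS lam b i ≤ b) ∧
    ∀ c : Fin n → ℕ, (∑ i, c i ≤ b) →
      ∑ i, (1 - Real.exp (-lam i * c i)) ≤
        ∑ i, (1 - Real.exp (-lam i * greedyMJS lam b i)) := by
  obtain ⟨h1, h2⟩ := greedy_aux lam hlam b
  refine ⟨h1, fun c hc => ?_⟩
  have := h2 c hc
  unfold FF at this
  simpa only [sum_jump] using this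
end

section
/- Diminishing returns of the optimal value: let V(b) denote the optimal value of the ExpResponse problem with integer budget b and fixed rates λ_i > 0. Then V(b+1) - V(b) is nonincreasing in b, i.e., V(b+2) - V(b+1) ≤ V(b+1) - V(b). -/
noncomputable def expResponseValue (n : ℕ) (lam : Fin n → ℝ) (b : ℕ) : ℝ :=
  sSup {v : ℝ | ∃ c : Fin n → ℕ, (∑ i, c i ≤ b) ∧
    v = ∑ i, (1 - Real.exp (-lam i * c i))}

namespace ERVaux

noncomputable def f (n : ℕ) (lam : Fin n → ℝ) (c : Fin n → ℕ) : ℝ :=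
  ∑ i, (1 - Real.exp (-lam i * c i))

lemma set_nonempty (n : ℕ) (lam : Fin n → ℝ) (b : ℕ) :
    Set.Nonempty {v : ℝ | ∃ c : Fin n → ℕ, (∑ i, c i ≤ b) ∧
      v = ∑ i, (1 - Real.exp (-lam i * c i))} :=
  ⟨f n lam 0, 0, by simp, rfl⟩

lemma set_bddAbove (n : ℕ) (lam : Fin n → ℝ) (b : ℕ) :
    BddAbove {v : ℝ | ∃ c : Fin n → ℕ, (∑ i, c i ≤ b) ∧
      v = ∑ i, (1 - Real.exp (-lam i * c i))} := by
  refine ⟨n, ?_⟩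
  rintro v ⟨c, -, rfl⟩
  calc ∑ i, (1 - Real.exp (-lam i * c i)) ≤ ∑ _i : Fin n, (1 : ℝ) := by
        apply Finset.sum_le_sum
        intro i _
        have := Real.exp_pos (-lam i * c i)
        linarith
    _ = n := by simp

lemma f_le (n : ℕ) (lam : Fin n → ℝ) (b : ℕ) (c : Fin n → ℕ) (h : ∑ i, c i ≤ b) :
    f n lam c ≤ expResponseValue n lam b :=
  le_csSup (set_bddAbove n lam b) ⟨c, h, rfl⟩

lemma f_update (n : ℕ) (lam : Fin n → ℝ) (c : Fin n → ℕ) (j : Fin n) (v : ℕ) :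
    f n lam (Function.update c j v) - f n lam c
      = (1 - Real.exp (-lam j * v)) - (1 - Real.exp (-lam j * c j)) := by
  unfold f
  rw [← Finset.sum_sub_distrib, Finset.sum_eq_single j]
  · simp
  · intro i _ hij
    simp [Function.update_of_ne hij]
  · simp

lemma sum_update (n : ℕ) (c : Fin n → ℕ) (j : Fin n) (v : ℕ) :
    ∑ i, Function.update c j v i = v + ∑ i ∈ Finset.univ.erase j, c i := by
  rw [Finset.sum_update_of_mem (Finset.mem_univ j)]
  congr 1
  rw [Finset.erase_eq]

-- exchange inequality on one coordinate
lemma exp_exchange (lam : ℝ) (hlam : 0 < lam) (x y : ℕ) (hxy : x + 1 ≤ y) :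
    Real.exp (-lam * ((x + 1 : ℕ) : ℝ)) + Real.exp (-lam * ((y - 1 : ℕ) : ℝ))
      ≤ Real.exp (-lam * (x : ℝ)) + Real.exp (-lam * (y : ℝ)) := by
  set a : ℝ := Real.exp (-lam) with ha
  have ha0 : 0 < a := Real.exp_pos _
  have ha1 : a < 1 := by
    rw [ha]
    have : -lam < 0 := by linarith
    calc Real.exp (-lam) < Real.exp 0 := Real.exp_lt_exp.2 this
      _ = 1 := Real.exp_zero
  have hpow : ∀ m : ℕ, Real.exp (-lam * (m : ℝ)) = a ^ m := by
    intro m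
    rw [mul_comm, Real.exp_nat_mul]
  rw [hpow, hpow, hpow, hpow]
  have h1 : a ^ (y - 1) ≤ a ^ x :=
    pow_le_pow_of_le_one ha0.le ha1.le (by omega)
  have h2 : a ^ (x + 1) = a ^ x * a := pow_succ a x
  have h3 : a ^ y = a ^ (y - 1) * a := by
    rw [← pow_succ]
    congr 1
    omega
  nlinarith [pow_nonneg ha0.le x, pow_nonneg ha0.le (y - 1)]

lemma core (n : ℕ) (lam : Fin n → ℝ) (hlam : ∀ i, 0 < lam i) (b : ℕ)
    (c d : Fin n → ℕ) (hc : ∑ i, c i ≤ b) (hd : ∑ i, d i ≤ b + 2) :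
    f n lam c + f n lam d ≤ expResponseValue n lam (b + 1) + expResponseValue n lam (b + 1) := by
  by_cases hsd : ∑ i, d i ≤ b + 1
  · have h1 := f_le n lam (b + 1) c (by omega)
    have h2 := f_le n lam (b + 1) d hsd
    linarith
  · -- ∑ d = b + 2 > b ≥ ∑ c, so some coordinate j has c j < d j
    have hlt : ∑ i, c i < ∑ i, d i := by omega
    have hj : ∃ j : Fin n, c j < d j := by
      by_contra h
      push_neg at h
      exact absurd (Finset.sum_le_sum fun i _ => h i) (not_le.2 hlt)
    obtain ⟨j, hj⟩ := hj
    set c' := Function.update c j (c j + 1) with hc'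
    set d' := Function.update d j (d j - 1) with hd'
    have hsc' : ∑ i, c' i ≤ b + 1 := by
      rw [hc', sum_update]
      have := (Finset.add_sum_erase Finset.univ c (Finset.mem_univ j)).symm
      omega
    have hsd' : ∑ i, d' i ≤ b + 1 := by
      rw [hd', sum_update]
      have := (Finset.add_sum_erase Finset.univ d (Finset.mem_univ j)).symm
      have hdj : 1 ≤ d j := by omega
      omega
    have h1 := f_le n lam (b + 1) c' hsc'
    have h2 := f_le n lam (b + 1) d' hsd'
    have hu1 := f_update n lam c j (c j + 1)
    have hu2 := f_update n lam d j (d j - 1)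
    have hex := exp_exchange (lam j) (hlam j) (c j) (d j) (by omega)
    have hcast : ((c j + 1 : ℕ) : ℝ) = ((c j : ℕ) : ℝ) + 1 := by push_cast; ring
    rw [hcast] at hex
    rw [← hc'] at hu1
    rw [← hd'] at hu2
    rw [hcast] at hu1
    linarith

end ERVaux

theorem optimal_value_diminishing_returns (n : ℕ) (lam : Fin n → ℝ)
    (hlam : ∀ i, 0 < lam i) (b : ℕ) :
    expResponseValue n lam (b + 2) - expResponseValue n lam (b + 1) ≤
      expResponseValue n lam (b + 1) - expResponseValue n lam b := by
  have key : expResponseValue n lam b + expResponseValue n lam (b + 2)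
      ≤ expResponseValue n lam (b + 1) + expResponseValue n lam (b + 1) := by
    have h2 : expResponseValue n lam (b + 2)
        ≤ expResponseValue n lam (b + 1) + expResponseValue n lam (b + 1)
          - expResponseValue n lam b := by
      apply csSup_le (ERVaux.set_nonempty n lam (b + 2))
      rintro v ⟨d, hd, rfl⟩
      have : expResponseValue n lam b
          ≤ expResponseValue n lam (b + 1) + expResponseValue n lam (b + 1)
            - ∑ i, (1 - Real.exp (-lam i * d i)) := by
        apply csSup_le (ERVaux.set_nonempty n lam b)
        rintro w ⟨c, hc, rfl⟩
        have := ERVaux.core n lam hlam b c d hc hd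
        unfold ERVaux.f at this
        linarith
      linarith
    linarith
  linarith
end
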